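/- arXiv:2006.00620 — 2 statements merged into one kernel-verified Lean document; each statement's English description precedes it below -/
import Mathlib

section
/- Let p, q, r be integers with p > q + 1, r > q + 1, and p + r even. Then ζ_{H^{(p,q+1)}}(r) + ζ_{H^{(r,q+1)}}(p) = ζ(p + r) + (2/q!) · Σ_{m odd, 0 ≤ m ≤ q} Σ_{k=0}^{m} (−1)^k · [q+1, m+1] · C(m, k) · ζ_{H^{(p−k)}}(r + k − m) + (1/q!) · Σ_{m=0}^{q} Σ_{k=0}^{m} (−1)^{m+k} · [q+1, m+1] · C(m, k) · ζ(p − k) · ζ(r + k − m), where ζ is the Riemann zeta function. -/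
open Finset Real

/-- The generalized harmonic number `H_n^{(p)} = ∑_{k=1}^n 1/k^p`. -/
noncomputable def gH (p : ℤ) (n : ℕ) : ℝ := ∑ k ∈ Finset.Icc 1 n, ((k : ℝ) ^ p)⁻¹

/-- The generalized hyperharmonic number `H_n^{(p,q)}`:
`H_n^{(p,0)} = 1/n^p` (with `H_0^{(p,q)} = 0`) and
`H_n^{(p,q)} = ∑_{k=1}^n H_k^{(p,q-1)}` for `q ≥ 1`. -/
noncomputable def gHH (p : ℤ) : ℕ → ℕ → ℝ
  | 0, n => if n = 0 then 0 else ((n : ℝ) ^ p)⁻¹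
  | q + 1, n => ∑ k ∈ Finset.Icc 1 n, gHH p q k

/-- Euler sum of generalized harmonic numbers `ζ_{H^{(p)}}(r) = ∑_{n≥1} H_n^{(p)}/n^r`. -/
noncomputable def eulerSum (p r : ℤ) : ℝ := ∑' n : ℕ+, gH p n / (n : ℝ) ^ r

/-- Euler sum of generalized hyperharmonic numbers
`ζ_{H^{(p,q)}}(r) = ∑_{n≥1} H_n^{(p,q)}/n^r`. -/
noncomputable def eulerSumHH (p : ℤ) (q : ℕ) (r : ℤ) : ℝ := ∑' n : ℕ+, gHH p q n / (n : ℝ) ^ r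

/-- Riemann zeta value at an integer argument, `ζ(s) = ∑_{n≥1} 1/n^s`. -/
noncomputable def zv (s : ℤ) : ℝ := ∑' n : ℕ+, ((n : ℝ) ^ s)⁻¹

/-- Unsigned Stirling numbers of the first kind, defined by
`x(x+1)⋯(x+q-1) = ∑_{k=0}^q [q,k] x^k`, i.e. `[n+1,k] = [n,k-1] + n·[n,k]`. -/
def stirlingFirst : ℕ → ℕ → ℕ
  | 0, 0 => 1
  | 0, _ + 1 => 0
  | _ + 1, 0 => 0
  | n + 1, k + 1 => stirlingFirst n k + n * stirlingFirst n (k + 1)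

/-- The series `μ(r,j) = ∑_{n≥1} 1/(n^r (n+j))`. -/
noncomputable def mu (r j : ℕ) : ℝ := ∑' n : ℕ+, 1 / ((n : ℝ) ^ r * ((n : ℝ) + j))

/-- `e_j(n+1, n+2, …, n+q)`: the `j`-th elementary symmetric polynomial
evaluated at the numbers `n+1, …, n+q`. -/
noncomputable def esymmVal (n q j : ℕ) : ℝ :=
  ∑ s ∈ Finset.powersetCard j (Finset.Icc 1 q), ∏ i ∈ s, ((n : ℝ) + i)

/-! ### Part 1: basic summability facts -/

/-- tsum over ℕ+ equals tsum over ℕ for functions vanishing at 0. -/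
lemma tsum_pnat_eq (f : ℕ → ℝ) (hf : f 0 = 0) : ∑' n : ℕ+, f n = ∑' n : ℕ, f n := by
  refine Function.Injective.tsum_eq (f := f) (g := fun n : ℕ+ => (n:ℕ))
    (fun a b h => PNat.coe_injective h) ?_
  intro n hn
  rcases Nat.eq_zero_or_pos n with h0 | h0
  · exact absurd (h0 ▸ hf) hn
  · exact ⟨⟨n, h0⟩, rfl⟩

lemma inv_zpow_nonneg (a : ℤ) (n : ℕ) : 0 ≤ ((n:ℝ)^a)⁻¹ := by positivity

lemma inv_zpow_zero (a : ℤ) (ha : a ≠ 0) : (((0:ℕ):ℝ)^a)⁻¹ = 0 := by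
  simp [zero_zpow a ha]

lemma summable_inv_zpow {a : ℤ} (ha : 2 ≤ a) : Summable (fun n : ℕ => ((n:ℝ)^a)⁻¹) := by
  have h2 : Summable (fun n : ℕ => ((n:ℝ)^2)⁻¹) := by
    simpa using (Real.summable_one_div_nat_pow (p := 2)).2 one_lt_two
  refine Summable.of_nonneg_of_le (fun n => inv_zpow_nonneg a n) (fun n => ?_) h2
  rcases Nat.eq_zero_or_pos n with h0 | h0
  · subst h0; simp [zero_zpow a (by omega)]
  · have h1 : (1:ℝ) ≤ (n:ℝ) := by exact_mod_cast h0
    have : ((n:ℝ))^(2:ℤ) ≤ (n:ℝ)^a := zpow_le_zpow_right₀ h1 ha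
    have hpos : (0:ℝ) < (n:ℝ)^(2:ℤ) := by positivity
    calc ((n:ℝ)^a)⁻¹ ≤ ((n:ℝ)^(2:ℤ))⁻¹ := by
          exact inv_anti₀ hpos this
      _ = ((n:ℝ)^2)⁻¹ := by norm_cast

lemma zv_eq_nat (a : ℤ) (ha : 2 ≤ a) : zv a = ∑' n : ℕ, ((n:ℝ)^a)⁻¹ :=
  tsum_pnat_eq (fun n => ((n:ℝ)^a)⁻¹) (inv_zpow_zero a (by omega))

lemma gH_zero (a : ℤ) : gH a 0 = 0 := by simp [gH]

lemma gH_nonneg (a : ℤ) (n : ℕ) : 0 ≤ gH a n :=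
  Finset.sum_nonneg fun k _ => inv_zpow_nonneg a k

lemma gH_le_zv (a : ℤ) (ha : 2 ≤ a) (n : ℕ) : gH a n ≤ zv a := by
  rw [zv_eq_nat a ha]
  exact Summable.sum_le_tsum _ (fun k _ => inv_zpow_nonneg a k) (summable_inv_zpow ha)

lemma eulerSum_eq_nat (a b : ℤ) : eulerSum a b = ∑' n : ℕ, gH a n / (n:ℝ)^b :=
  tsum_pnat_eq (fun n => gH a n / (n:ℝ)^b) (by simp [gH_zero])

lemma summable_gH_div {a b : ℤ} (ha : 2 ≤ a) (hb : 2 ≤ b) :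
    Summable (fun n : ℕ => gH a n / (n:ℝ)^b) := by
  refine Summable.of_nonneg_of_le (fun n => div_nonneg (gH_nonneg a n) (by positivity))
    (fun n => ?_) ((summable_inv_zpow hb).mul_left (zv a))
  rw [div_eq_mul_inv]
  exact mul_le_mul_of_nonneg_right (gH_le_zv a ha n) (inv_zpow_nonneg b n)

/-! ### Part 2: the reflection formula for classical Euler sums -/

section Reflection
variable (a b : ℤ)

/-- The summand on pairs `(n, k)`: `1/(k^a n^b)`. -/
noncomputable def FF (a b : ℤ) (x : ℕ × ℕ) : ℝ := ((x.2:ℝ)^a)⁻¹ * ((x.1:ℝ)^b)⁻¹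

lemma FF_nonneg (x : ℕ × ℕ) : 0 ≤ FF a b x :=
  mul_nonneg (inv_zpow_nonneg _ _) (inv_zpow_nonneg _ _)

lemma summable_FF (ha : 2 ≤ a) (hb : 2 ≤ b) : Summable (FF a b) := by
  have := ((summable_inv_zpow hb).mul_of_nonneg (summable_inv_zpow ha)
    (fun n => inv_zpow_nonneg b n) (fun n => inv_zpow_nonneg a n))
  exact this.congr fun x => mul_comm _ _

lemma tsum_FF (ha : 2 ≤ a) (hb : 2 ≤ b) : ∑' x : ℕ × ℕ, FF a b x = zv a * zv b := by
  rw [zv_eq_nat a ha, zv_eq_nat b hb, mul_comm]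
  have hfg : Summable (fun x : ℕ × ℕ => ((x.1:ℝ)^b)⁻¹ * ((x.2:ℝ)^a)⁻¹) :=
    (summable_inv_zpow hb).mul_of_nonneg (summable_inv_zpow ha)
      (fun n => inv_zpow_nonneg b n) (fun n => inv_zpow_nonneg a n)
  have h1 := Summable.tsum_mul_tsum (f := fun n:ℕ => ((n:ℝ)^b)⁻¹) (g := fun n:ℕ => ((n:ℝ)^a)⁻¹)
      (summable_inv_zpow hb) (summable_inv_zpow ha) hfg
  exact (tsum_congr fun x : ℕ × ℕ => (mul_comm (((x.2:ℝ))^a)⁻¹ (((x.1:ℝ))^b)⁻¹)).trans h1.symm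

/-- lower-triangle part `k ≤ n`, indexed `(n,k)`. -/
noncomputable def GG (a b : ℤ) (x : ℕ × ℕ) : ℝ := if x.2 ≤ x.1 then FF a b x else 0

lemma summable_GG (ha : 2 ≤ a) (hb : 2 ≤ b) : Summable (GG a b) :=
  Summable.of_nonneg_of_le (fun x => by unfold GG; split <;> simp [FF_nonneg a b])
    (fun x => by unfold GG; split <;> simp [FF_nonneg a b]) (summable_FF a b ha hb)

lemma tsum_GG (ha : 2 ≤ a) (hb : 2 ≤ b) : ∑' x : ℕ × ℕ, GG a b x = eulerSum a b := by
  rw [eulerSum_eq_nat, Summable.tsum_prod' (summable_GG a b ha hb) (fun n =>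
    summable_of_ne_finset_zero (s := Finset.Icc 1 n) (fun k hk => ?_))]
  · refine tsum_congr fun n => ?_
    rw [tsum_eq_sum (s := Finset.Icc 1 n) (fun k hk => ?_)]
    · have : ∀ k ∈ Finset.Icc 1 n, GG a b (n, k) = ((k:ℝ)^a)⁻¹ * ((n:ℝ)^b)⁻¹ := by
        intro k hk
        simp only [Finset.mem_Icc] at hk
        simp [GG, FF, hk.2]
      rw [Finset.sum_congr rfl this, ← Finset.sum_mul, gH, div_eq_mul_inv]
    · simp only [Finset.mem_Icc, not_and_or, not_le] at hk
      rcases hk with h | h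
      · interval_cases k
        simp [GG, FF, zero_zpow a (by omega)]
      · simp only [GG]; rw [if_neg (by omega)]
  · simp only [Finset.mem_Icc, not_and_or, not_le] at hk
    rcases hk with h | h
    · interval_cases k
      simp [GG, FF, zero_zpow a (by omega)]
    · simp only [GG]; rw [if_neg (by omega)]

lemma tsum_GG_swap (ha : 2 ≤ a) (hb : 2 ≤ b) :
    ∑' x : ℕ × ℕ, GG b a (x.2, x.1) = eulerSum b a := by
  rw [← tsum_GG b a hb ha, ← (Equiv.prodComm ℕ ℕ).tsum_eq (fun x => GG b a x)]
  rfl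

/-- diagonal part -/
lemma tsum_DD (ha : 2 ≤ a) (hb : 2 ≤ b) :
    ∑' x : ℕ × ℕ, (if x.1 = x.2 then FF a b x else 0) = zv (a + b) := by
  rw [zv_eq_nat (a+b) (by omega)]
  rw [← Function.Injective.tsum_eq (g := fun n : ℕ => (n, n))
    (f := fun x : ℕ × ℕ => if x.1 = x.2 then FF a b x else 0)
    (fun x y h => by simpa using congrArg Prod.fst h) ?_]
  · refine tsum_congr fun n => ?_
    rcases Nat.eq_zero_or_pos n with h0 | h0
    · subst h0
      simp [FF, zero_zpow a (by omega), zero_zpow b (by omega), zero_zpow (a+b) (by omega)]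
    · have hn : (n:ℝ) ≠ 0 := by positivity
      rw [if_pos rfl]
      show ((n:ℝ)^a)⁻¹ * ((n:ℝ)^b)⁻¹ = _
      rw [← mul_inv, ← zpow_add₀ hn]
  · intro x hx
    simp only [Function.mem_support] at hx
    have : x.1 = x.2 := by by_contra h; simp [h] at hx
    exact ⟨x.1, by rw [Prod.ext_iff]; exact ⟨rfl, this⟩⟩

theorem reflection' (ha : 2 ≤ a) (hb : 2 ≤ b) :
    eulerSum a b + eulerSum b a = zv a * zv b + zv (a + b) := by
  rw [← tsum_GG a b ha hb, ← tsum_GG_swap a b ha hb, ← tsum_FF a b ha hb, ← tsum_DD a b ha hb]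
  have hS1 := summable_GG a b ha hb
  have hS2 : Summable (fun x : ℕ × ℕ => GG b a (x.2, x.1)) := by
    have := (summable_GG b a hb ha).comp_injective
      (i := fun x : ℕ × ℕ => (x.2, x.1)) (fun x y h => by
        rw [Prod.ext_iff] at h ⊢; exact ⟨h.2, h.1⟩)
    exact this
  rw [← Summable.tsum_add hS1 hS2]
  have hF := summable_FF a b ha hb
  have hD : Summable (fun x : ℕ × ℕ => if x.1 = x.2 then FF a b x else 0) :=
    Summable.of_nonneg_of_le (fun x => by split <;> simp [FF_nonneg a b])
      (fun x => by split <;> simp [FF_nonneg a b]) hF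
  rw [← Summable.tsum_add hF hD]
  refine tsum_congr fun x => ?_
  obtain ⟨n, k⟩ := x
  simp only [GG, FF]
  rcases lt_trichotomy k n with h | h | h
  · rw [if_pos h.le, if_neg (by omega), if_neg (by omega)]
  · subst h; rw [if_pos (le_refl k), if_pos (le_refl k), if_pos rfl]; ring_nf
  · rw [if_neg (by omega), if_pos h.le, if_neg (by omega)]; ring

end Reflection

/-! ### Part 3: combinatorial identities -/

lemma stirlingFirst_zero (n : ℕ) : stirlingFirst (n + 1) 0 = 0 := rfl

lemma stirlingFirst_gt (n k : ℕ) (h : n < k) : stirlingFirst n k = 0 := by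
  induction n generalizing k with
  | zero => match k, h with | k+1, _ => rfl
  | succ n ih =>
    match k, h with
    | k+1, h =>
      show stirlingFirst n k + n * stirlingFirst n (k+1) = 0
      rw [ih k (by omega), ih (k+1) (by omega)]
      simp

lemma stirlingFirst_one (q : ℕ) : stirlingFirst (q + 1) 1 = q.factorial := by
  induction q with
  | zero => rfl
  | succ q ih =>
    show stirlingFirst (q+1) 0 + (q+1) * stirlingFirst (q+1) 1 = _
    rw [stirlingFirst_zero, ih]
    simp [Nat.factorial_succ]

/-- hockey stick -/
lemma hockey (q m : ℕ) : ∑ i ∈ Finset.range m, (i + q).choose q = (m + q).choose (q + 1) := by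
  induction m with
  | zero => simp
  | succ m ih =>
    rw [Finset.sum_range_succ, ih]
    have h1 : m + 1 + q = (m + q) + 1 := by omega
    rw [h1, Nat.choose_succ_succ (m + q) q]
    simp only [Nat.succ_eq_add_one]
    omega

/-- `∏_{i=1}^q (x+i) = q! * C(x+q, q)` for natural `x`. -/
lemma prod_eq_choose (q x : ℕ) :
    ∏ i ∈ Finset.Icc 1 q, ((x:ℝ) + i) = (q.factorial : ℝ) * ((x + q).choose q : ℝ) := by
  induction q with
  | zero => simp
  | succ q ih =>
    rw [Finset.prod_Icc_succ_top (by omega), ih]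
    have key : (x + q + 1) * (x + q).choose q = (q + 1) * (x + (q+1)).choose (q+1) := by
      have h2 := Nat.add_one_mul_choose_eq (x + q) q
      rw [h2, mul_comm, Nat.add_assoc]
    have keyR : ((x:ℝ) + q + 1) * ((x + q).choose q : ℝ)
        = ((q:ℝ) + 1) * (((x + (q+1)).choose (q+1) : ℕ) : ℝ) := by
      exact_mod_cast congrArg (Nat.cast : ℕ → ℝ) key
    push_cast
    push_cast at keyR
    calc (q.factorial:ℝ) * ((x + q).choose q : ℝ) * ((x:ℝ) + (q + 1))
        = (q.factorial:ℝ) * (((x:ℝ) + q + 1) * ((x + q).choose q : ℝ)) := by ring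
      _ = (q.factorial:ℝ) * (((q:ℝ) + 1) * ((x + (q+1)).choose (q+1) : ℝ)) := by rw [keyR]
      _ = (q.factorial:ℝ) * ((q:ℝ) + 1) * ((x + (q+1)).choose (q+1) : ℝ) := by ring
      _ = _ := by rw [Nat.factorial_succ]; push_cast; ring

/-- Stirling polynomial identity: `∏_{i=1}^q (x+i) = ∑_m [q+1, m+1] x^m`. -/
lemma stirling_poly (q : ℕ) (x : ℝ) :
    ∏ i ∈ Finset.Icc 1 q, (x + i) =
      ∑ m ∈ Finset.range (q + 1), (stirlingFirst (q + 1) (m + 1) : ℝ) * x ^ m := by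
  induction q with
  | zero => simp [stirlingFirst]
  | succ q ih =>
    rw [Finset.prod_Icc_succ_top (by omega), ih]
    have expand : ∀ m, (stirlingFirst (q + 1 + 1) (m + 1) : ℝ)
        = (stirlingFirst (q+1) m : ℝ) + ((q:ℝ)+1) * (stirlingFirst (q+1) (m+1) : ℝ) := by
      intro m
      show ((stirlingFirst (q+1) m + (q+1) * stirlingFirst (q+1) (m+1) : ℕ) : ℝ) = _
      push_cast; ring
    set P := ∑ m ∈ Finset.range (q + 1), (stirlingFirst (q + 1) (m + 1) : ℝ) * x ^ m with hP
    have hR : ∑ m ∈ Finset.range (q + 1 + 1), (stirlingFirst (q + 1 + 1) (m+1) : ℝ) * x^m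
        = x * P + ((q:ℝ)+1) * P := by
      have e1 : ∀ m ∈ Finset.range (q+1+1), (stirlingFirst (q+1+1) (m+1):ℝ) * x^m =
          (stirlingFirst (q+1) m : ℝ) * x^m
            + ((q:ℝ)+1) * ((stirlingFirst (q+1) (m+1):ℝ) * x^m) :=
        fun m _ => by rw [expand m]; ring
      rw [Finset.sum_congr rfl e1, Finset.sum_add_distrib, ← Finset.mul_sum]
      congr 1
      · rw [Finset.sum_range_succ' (fun m => (stirlingFirst (q+1) m:ℝ) * x^m) (q+1)]
        rw [stirlingFirst_zero, hP, Finset.mul_sum]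
        simp only [Nat.cast_zero, zero_mul, add_zero, pow_succ]
        exact Finset.sum_congr rfl fun m _ => by ring
      · congr 1
        rw [Finset.sum_range_succ, stirlingFirst_gt (q+1) (q+2) (by omega)]
        simp
        exact hP.symm
    rw [hR]
    push_cast
    ring

/-- closed form for hyperharmonic numbers -/
lemma gHH_closed (p : ℤ) (q : ℕ) : ∀ n : ℕ, gHH p (q + 1) n
    = ∑ k ∈ Finset.Icc 1 n, ((n - k + q).choose q : ℝ) * ((k : ℝ) ^ p)⁻¹ := by
  induction q with
  | zero =>
    intro n
    show ∑ k ∈ Finset.Icc 1 n, gHH p 0 k = _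
    refine Finset.sum_congr rfl fun k hk => ?_
    simp only [Finset.mem_Icc] at hk
    show (if k = 0 then 0 else ((k:ℝ)^p)⁻¹) = _
    rw [if_neg (by omega)]
    simp
  | succ q ih =>
    intro n
    show ∑ j ∈ Finset.Icc 1 n, gHH p (q+1) j = _
    rw [Finset.sum_congr rfl (fun j _ => ih j)]
    rw [Finset.sum_comm' (t' := Finset.Icc 1 n) (s' := fun k => Finset.Icc k n)
      (fun j k => by simp only [Finset.mem_Icc]; omega)]
    refine Finset.sum_congr rfl fun k hk => ?_
    simp only [Finset.mem_Icc] at hk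
    rw [← Finset.sum_mul, ← Nat.cast_sum]
    congr 1
    norm_cast
    have hmap : ∑ j ∈ Finset.Icc k n, (j - k + q).choose q
        = ∑ i ∈ Finset.range (n + 1 - k), (i + q).choose q := by
      rw [← Finset.Ico_add_one_right_eq_Icc]
      rw [Finset.sum_Ico_eq_sum_range]
      refine Finset.sum_congr rfl fun i _ => by congr 1; omega
    rw [hmap, hockey]
    congr 1
    omega

/-! ### Part 4: expansion of hyperharmonic Euler sums -/

lemma sub_pow' (x y : ℝ) (m : ℕ) :
    (x - y)^m = ∑ j ∈ Finset.range (m+1), (-1:ℝ)^j * (m.choose j : ℝ) * x^(m-j) * y^j := by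
  rw [sub_pow, ← Finset.sum_range_reflect]
  refine Finset.sum_congr rfl fun j hj => ?_
  simp only [Finset.mem_range] at hj
  have hjm : j ≤ m := by omega
  have e1 : m + 1 - 1 - j = m - j := by omega
  rw [e1]
  have h1 : m - (m - j) = j := by omega
  have h2 : (-1:ℝ)^(m-j+m) = (-1:ℝ)^j := by
    have : (m - j + m) = j + 2*(m-j) := by omega
    rw [this, pow_add, pow_mul]; simp
  rw [h1, h2, Nat.choose_symm hjm]
  ring

lemma zpow_combine {x : ℝ} (hx : x ≠ 0) (a b : ℤ) : x^a * (x^b)⁻¹ = (x^(b-a))⁻¹ := by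
  rw [← zpow_neg, ← zpow_neg, ← zpow_add₀ hx]
  congr 1
  ring

lemma gHH_succ_zero (p : ℤ) (q : ℕ) : gHH p (q+1) 0 = 0 := by
  show ∑ k ∈ Finset.Icc 1 0, gHH p q k = 0
  simp

/-- pointwise expansion of the hyperharmonic summand -/
lemma gHH_pointwise (p r : ℤ) (q : ℕ) (n : ℕ) :
    gHH p (q + 1) n / (n:ℝ)^r
      = ∑ m ∈ Finset.range (q + 1), ∑ j ∈ Finset.range (m + 1),
          ((q.factorial : ℝ)⁻¹ * (-1:ℝ)^j * (stirlingFirst (q + 1) (m + 1) : ℝ)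
            * (m.choose j : ℝ)) * (gH (p - j) n / (n:ℝ)^(r + j - m)) := by
  rcases Nat.eq_zero_or_pos n with h0 | h0
  · subst h0
    rw [gHH_succ_zero]
    simp [gH_zero]
  have hn : (n:ℝ) ≠ 0 := by positivity
  have hcast : ∀ k ∈ Finset.Icc 1 n, ((n - k + q).choose q : ℝ)
      = (q.factorial : ℝ)⁻¹ * ∑ m ∈ Finset.range (q + 1),
          (stirlingFirst (q + 1) (m + 1) : ℝ) * ((n:ℝ) - k) ^ m := by
    intro k hk
    simp only [Finset.mem_Icc] at hk
    have h1 := prod_eq_choose q (n - k)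
    have h2 := stirling_poly q (((n - k : ℕ) : ℝ))
    rw [h1] at h2
    have h3 : (((n - k : ℕ)) : ℝ) = (n:ℝ) - (k:ℝ) := by
      push_cast [hk.2]; ring
    rw [h3] at h2
    rw [← h2]
    field_simp
  rw [gHH_closed, Finset.sum_congr rfl (fun k hk => by rw [hcast k hk]), div_eq_mul_inv,
    Finset.sum_mul]
  have hterm : ∀ k ∈ Finset.Icc 1 n,
      ((q.factorial : ℝ)⁻¹ * ∑ m ∈ Finset.range (q + 1),
          (stirlingFirst (q + 1) (m + 1) : ℝ) * ((n:ℝ) - k) ^ m) * ((k:ℝ)^p)⁻¹ * ((n:ℝ)^r)⁻¹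
      = ∑ m ∈ Finset.range (q + 1), ∑ j ∈ Finset.range (m + 1),
          ((q.factorial : ℝ)⁻¹ * (-1:ℝ)^j * (stirlingFirst (q + 1) (m + 1) : ℝ)
            * (m.choose j : ℝ)) *
            ((n:ℝ)^(m-j : ℕ) * (k:ℝ)^j * ((k:ℝ)^p)⁻¹ * ((n:ℝ)^r)⁻¹) := by
    intro k hk
    rw [Finset.mul_sum, Finset.sum_mul, Finset.sum_mul]
    refine Finset.sum_congr rfl fun m _ => ?_
    rw [sub_pow', Finset.mul_sum, Finset.mul_sum, Finset.sum_mul, Finset.sum_mul]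
    refine Finset.sum_congr rfl fun j _ => ?_
    ring
  rw [Finset.sum_congr rfl hterm, Finset.sum_comm]
  refine Finset.sum_congr rfl fun m hm => ?_
  rw [Finset.sum_comm]
  refine Finset.sum_congr rfl fun j hj => ?_
  simp only [Finset.mem_range] at hm hj
  rw [← Finset.mul_sum]
  congr 1
  have hk' : ∀ k ∈ Finset.Icc 1 n, (n:ℝ)^(m-j : ℕ) * (k:ℝ)^j * ((k:ℝ)^p)⁻¹ * ((n:ℝ)^r)⁻¹
      = ((k:ℝ)^(p - j))⁻¹ * (((n:ℝ)^(r + j - m))⁻¹) := by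
    intro k hk
    simp only [Finset.mem_Icc] at hk
    have hkR : (k:ℝ) ≠ 0 := by
      have : 0 < k := hk.1
      positivity
    have e1 : (k:ℝ)^(j:ℕ) * ((k:ℝ)^p)⁻¹ = ((k:ℝ)^(p - j))⁻¹ := by
      rw [← zpow_natCast (k:ℝ) j, zpow_combine hkR]
    have e2 : (n:ℝ)^(m-j : ℕ) * ((n:ℝ)^r)⁻¹ = ((n:ℝ)^(r + j - m))⁻¹ := by
      rw [← zpow_natCast (n:ℝ) (m-j), zpow_combine hn]
      congr 1
      have : ((m - j : ℕ) : ℤ) = (m:ℤ) - j := by omega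
      rw [this]
      ring
    calc (n:ℝ)^(m-j : ℕ) * (k:ℝ)^j * ((k:ℝ)^p)⁻¹ * ((n:ℝ)^r)⁻¹
        = ((k:ℝ)^(j:ℕ) * ((k:ℝ)^p)⁻¹) * ((n:ℝ)^(m-j : ℕ) * ((n:ℝ)^r)⁻¹) := by ring
      _ = _ := by rw [e1, e2]
  rw [Finset.sum_congr rfl hk', ← Finset.sum_mul, gH, div_eq_mul_inv]

lemma eulerSumHH_expand (p r : ℤ) (q : ℕ) (hp : (q:ℤ) + 1 < p) (hr : (q:ℤ) + 1 < r) :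
    eulerSumHH p (q + 1) r
      = ∑ m ∈ Finset.range (q + 1), ∑ j ∈ Finset.range (m + 1),
          ((q.factorial : ℝ)⁻¹ * (-1:ℝ)^j * (stirlingFirst (q + 1) (m + 1) : ℝ)
            * (m.choose j : ℝ)) * eulerSum (p - j) (r + j - m) := by
  have h0 : eulerSumHH p (q + 1) r = ∑' n : ℕ, gHH p (q+1) n / (n:ℝ)^r :=
    tsum_pnat_eq (fun n => gHH p (q+1) n / (n:ℝ)^r) (by simp [gHH_succ_zero])
  rw [h0, tsum_congr (gHH_pointwise p r q)]
  have hsum : ∀ m ∈ Finset.range (q + 1), ∀ j ∈ Finset.range (m + 1),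
      Summable (fun n : ℕ =>
        ((q.factorial : ℝ)⁻¹ * (-1:ℝ)^j * (stirlingFirst (q + 1) (m + 1) : ℝ)
          * (m.choose j : ℝ)) * (gH (p - j) n / (n:ℝ)^(r + j - m))) := by
    intro m hm j hj
    simp only [Finset.mem_range] at hm hj
    exact (summable_gH_div (by omega) (by omega)).mul_left _
  rw [Summable.tsum_finsetSum (fun m hm => summable_sum (fun j hj => hsum m hm j hj))]
  refine Finset.sum_congr rfl fun m hm => ?_
  rw [Summable.tsum_finsetSum (fun j hj => hsum m hm j hj)]
  refine Finset.sum_congr rfl fun j hj => ?_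
  rw [tsum_mul_left, eulerSum_eq_nat]

/-! ### Part 5: final assembly -/

lemma realW (m : ℕ) :
    ∑ i ∈ Finset.range (m+1), (-1:ℝ)^i * (m.choose i : ℝ) = if m = 0 then 1 else 0 := by
  have h := Int.alternating_sum_range_choose (n := m)
  have h2 := congrArg (fun z : ℤ => (z : ℝ)) h
  push_cast at h2
  convert h2 using 1

lemma neg_one_pow_sub (m k : ℕ) (hk : k ≤ m) : (-1:ℝ)^(m-k) = (-1:ℝ)^m * (-1:ℝ)^k := by
  have h : (-1:ℝ)^m = (-1:ℝ)^(m-k) * (-1:ℝ)^k := by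
    rw [← pow_add, Nat.sub_add_cancel hk]
  have hk2 : (-1:ℝ)^k * (-1:ℝ)^k = 1 := by
    rw [← pow_add, ← two_mul, pow_mul]
    norm_num
  calc (-1:ℝ)^(m-k) = (-1:ℝ)^(m-k) * ((-1:ℝ)^k * (-1:ℝ)^k) := by rw [hk2, mul_one]
    _ = ((-1:ℝ)^(m-k) * (-1:ℝ)^k) * (-1:ℝ)^k := by ring
    _ = (-1:ℝ)^m * (-1:ℝ)^k := by rw [← h]

/-- Reflection formula for Euler sums of generalized hyperharmonic numbers. -/
theorem stmt_3 (p r : ℤ) (q : ℕ) (hp : (q : ℤ) + 1 < p) (hr : (q : ℤ) + 1 < r)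
    (hpr : Even (p + r)) :
    eulerSumHH p (q + 1) r + eulerSumHH r (q + 1) p
      = zv (p + r)
        + (2 / (q.factorial : ℝ)) *
            ∑ m ∈ (Finset.range (q + 1)).filter (fun m => Odd m),
              ∑ k ∈ Finset.range (m + 1),
                (-1 : ℝ) ^ k * (stirlingFirst (q + 1) (m + 1) : ℝ) * (m.choose k : ℝ) *
                  eulerSum (p - k) (r + k - m)
        + (1 / (q.factorial : ℝ)) *
            ∑ m ∈ Finset.range (q + 1), ∑ k ∈ Finset.range (m + 1),
              (-1 : ℝ) ^ (m + k) * (stirlingFirst (q + 1) (m + 1) : ℝ) * (m.choose k : ℝ) *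
                zv (p - k) * zv (r + k - m) := by
  classical
  have hqfac : ((q.factorial : ℝ)) ≠ 0 := by
    exact_mod_cast q.factorial_ne_zero
  rw [eulerSumHH_expand p r q hp hr, eulerSumHH_expand r p q hr hp]
  -- reflect the inner sum of the second expansion
  have hrefl2 : ∀ m ∈ Finset.range (q+1),
      ∑ j ∈ Finset.range (m + 1),
          ((q.factorial : ℝ)⁻¹ * (-1:ℝ)^j * (stirlingFirst (q + 1) (m + 1) : ℝ)
            * (m.choose j : ℝ)) * eulerSum (r - j) (p + j - m)
      = ∑ k ∈ Finset.range (m + 1),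
          ((q.factorial : ℝ)⁻¹ * (-1:ℝ)^(m-k) * (stirlingFirst (q + 1) (m + 1) : ℝ)
            * (m.choose k : ℝ)) * eulerSum (r + k - m) (p - k) := by
    intro m _
    rw [← Finset.sum_range_reflect (fun k =>
      ((q.factorial : ℝ)⁻¹ * (-1:ℝ)^(m-k) * (stirlingFirst (q + 1) (m + 1) : ℝ)
        * (m.choose k : ℝ)) * eulerSum (r + k - m) (p - k)) (m+1)]
    refine Finset.sum_congr rfl fun j hj => ?_
    simp only [Finset.mem_range] at hj
    have hjm : j ≤ m := by omega
    simp only [Nat.add_sub_cancel]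
    have e1 : m - (m - j) = j := by omega
    have e2 : m.choose (m - j) = m.choose j := Nat.choose_symm hjm
    have e3 : ((m - j : ℕ) : ℤ) = (m:ℤ) - j := by omega
    rw [e1, e2, e3]
    have a1 : r + ((m:ℤ) - j) - m = r - j := by ring
    have a2 : p - ((m:ℤ) - j) = p + j - m := by ring
    rw [a1, a2]
  rw [Finset.sum_congr rfl hrefl2, ← Finset.sum_add_distrib]
  -- per-m key computation
  have key : ∀ m ∈ Finset.range (q+1),
      (∑ k ∈ Finset.range (m + 1),
          ((q.factorial : ℝ)⁻¹ * (-1:ℝ)^k * (stirlingFirst (q + 1) (m + 1) : ℝ)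
            * (m.choose k : ℝ)) * eulerSum (p - k) (r + k - m)
        + ∑ k ∈ Finset.range (m + 1),
          ((q.factorial : ℝ)⁻¹ * (-1:ℝ)^(m-k) * (stirlingFirst (q + 1) (m + 1) : ℝ)
            * (m.choose k : ℝ)) * eulerSum (r + k - m) (p - k))
      = (if Odd m then (2 / (q.factorial : ℝ)) *
            ∑ k ∈ Finset.range (m + 1),
              (-1 : ℝ) ^ k * (stirlingFirst (q + 1) (m + 1) : ℝ) * (m.choose k : ℝ) *
                eulerSum (p - k) (r + k - m) else 0)
        + (1 / (q.factorial : ℝ)) *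
            ∑ k ∈ Finset.range (m + 1),
              (-1 : ℝ) ^ (m + k) * (stirlingFirst (q + 1) (m + 1) : ℝ) * (m.choose k : ℝ) *
                zv (p - k) * zv (r + k - m)
        + (if m = 0 then zv (p + r) else 0) := by
    intro m hm
    simp only [Finset.mem_range] at hm
    have hmq : m ≤ q := by omega
    set s : ℝ := (stirlingFirst (q + 1) (m + 1) : ℝ) with hs
    -- pointwise reflection
    have inner : ∀ k ∈ Finset.range (m+1),
        ((q.factorial : ℝ)⁻¹ * (-1:ℝ)^k * s * (m.choose k : ℝ)) * eulerSum (p - k) (r + k - m)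
          + ((q.factorial : ℝ)⁻¹ * (-1:ℝ)^(m-k) * s * (m.choose k : ℝ))
              * eulerSum (r + k - m) (p - k)
        = (q.factorial : ℝ)⁻¹ * s *
            ((1 - (-1:ℝ)^m) * ((-1:ℝ)^k * (m.choose k : ℝ) * eulerSum (p - k) (r + k - m))
             + (-1:ℝ)^(m+k) * ((m.choose k : ℝ) * (zv (p - k) * zv (r + k - m)))
             + ((-1:ℝ)^m * zv (p + r - m)) * ((-1:ℝ)^k * (m.choose k : ℝ))) := by
      intro k hk
      simp only [Finset.mem_range] at hk
      have hkm : k ≤ m := by omega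
      have hpk : (2:ℤ) ≤ p - k := by
        have : (k:ℤ) ≤ q := by exact_mod_cast le_trans hkm hmq
        omega
      have hrk : (2:ℤ) ≤ r + k - m := by
        have h1 : (k:ℤ) ≥ 0 := Int.natCast_nonneg k
        have h2 : (m:ℤ) ≤ q := by exact_mod_cast hmq
        have h3 : (k:ℤ) ≤ m := by exact_mod_cast hkm
        omega
      have hrefl := reflection' (p - k) (r + k - m) hpk hrk
      have hz : (p - (k:ℤ)) + (r + k - m) = p + r - m := by ring
      rw [hz] at hrefl
      have hE2 : eulerSum (r + k - m) (p - k)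
          = zv (p - k) * zv (r + k - m) + zv (p + r - m) - eulerSum (p - k) (r + k - m) := by
        linarith
      rw [hE2, neg_one_pow_sub m k hkm, pow_add]
      ring
    rw [← Finset.sum_add_distrib, Finset.sum_congr rfl inner, ← Finset.mul_sum,
      Finset.sum_add_distrib, Finset.sum_add_distrib, ← Finset.mul_sum, ← Finset.mul_sum,
      realW m]
    have hSB : ∑ k ∈ Finset.range (m+1),
        (-1:ℝ)^(m+k) * s * (m.choose k : ℝ) * zv (p - k) * zv (r + k - m)
        = s * ∑ k ∈ Finset.range (m+1),
            (-1:ℝ)^(m+k) * ((m.choose k : ℝ) * (zv (p - k) * zv (r + k - m))) := by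
      rw [Finset.mul_sum]
      exact Finset.sum_congr rfl fun k _ => by ring
    have hSA : ∑ k ∈ Finset.range (m+1),
        (-1:ℝ)^k * s * (m.choose k : ℝ) * eulerSum (p - k) (r + k - m)
        = s * ∑ k ∈ Finset.range (m+1),
            (-1:ℝ)^k * (m.choose k : ℝ) * eulerSum (p - k) (r + k - m) := by
      rw [Finset.mul_sum]
      exact Finset.sum_congr rfl fun k _ => by ring
    rcases Nat.even_or_odd m with he | ho
    · have hnotodd : ¬ Odd m := by rwa [← Nat.not_odd_iff_even] at he
      have hpow : (-1:ℝ)^m = 1 := Even.neg_one_pow he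
      rw [if_neg hnotodd, hpow]
      rcases Nat.eq_zero_or_pos m with hm0 | hm0
      · subst hm0
        rw [if_pos rfl, if_pos rfl]
        have hs1 : s = (q.factorial : ℝ) := by
          rw [hs, stirlingFirst_one]
        rw [hSB, hs1]
        simp only [Nat.cast_zero, sub_zero, add_zero]
        field_simp
        try ring
      · rw [if_neg (by omega), if_neg (by omega), hSB]
        field_simp
        try ring
    · have hodd : Odd m := ho
      have hpow : (-1:ℝ)^m = -1 := Odd.neg_one_pow ho
      have hm0 : m ≠ 0 := by
        rintro rfl
        simp at ho
      rw [if_pos hodd, if_neg hm0, if_neg hm0, hpow, hSB, hSA]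
      field_simp
      try ring
  rw [Finset.sum_congr rfl key]
  rw [Finset.sum_add_distrib, Finset.sum_add_distrib]
  have hA : ∑ m ∈ Finset.range (q+1), (if Odd m then (2 / (q.factorial : ℝ)) *
        ∑ k ∈ Finset.range (m + 1),
          (-1 : ℝ) ^ k * (stirlingFirst (q + 1) (m + 1) : ℝ) * (m.choose k : ℝ) *
            eulerSum (p - k) (r + k - m) else 0)
      = (2 / (q.factorial : ℝ)) *
          ∑ m ∈ (Finset.range (q + 1)).filter (fun m => Odd m),
            ∑ k ∈ Finset.range (m + 1),
              (-1 : ℝ) ^ k * (stirlingFirst (q + 1) (m + 1) : ℝ) * (m.choose k : ℝ) *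
                eulerSum (p - k) (r + k - m) := by
    rw [Finset.mul_sum, Finset.sum_filter]
  have hB : ∑ m ∈ Finset.range (q+1), (1 / (q.factorial : ℝ)) *
        ∑ k ∈ Finset.range (m + 1),
          (-1 : ℝ) ^ (m + k) * (stirlingFirst (q + 1) (m + 1) : ℝ) * (m.choose k : ℝ) *
            zv (p - k) * zv (r + k - m)
      = (1 / (q.factorial : ℝ)) *
          ∑ m ∈ Finset.range (q + 1), ∑ k ∈ Finset.range (m + 1),
            (-1 : ℝ) ^ (m + k) * (stirlingFirst (q + 1) (m + 1) : ℝ) * (m.choose k : ℝ) *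
              zv (p - k) * zv (r + k - m) := by
    rw [Finset.mul_sum]
  have hC : ∑ m ∈ Finset.range (q+1), (if m = 0 then zv (p + r) else 0) = zv (p + r) := by
    rw [Finset.sum_ite_eq' (Finset.range (q+1)) 0 (fun _ => zv (p + r)),
      if_pos (Finset.mem_range.mpr (by omega))]
  rw [hA, hB, hC]
  ring
end

section
/- Let q, l ≥ 0 be integers with l ≥ q, and let m ≥ 1 be an integer. Then the series of hyperharmonic numbers satisfies Σ_{n=1}^∞ h_n^{(q)} / ((n+m)·C(n+m+l, l)) = Σ_{j=0}^{l−q} (−1)^j · C(l−q, j) · H_{m+j}/(m+j) = (H_{m+l−q} − H_{l−q}) / (m·C(m+l−q, l−q)). -/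
open Finset Real

open Filter Topology

noncomputable def Hr (n : ℕ) : ℝ := ∑ k ∈ Finset.Icc 1 n, (k:ℝ)⁻¹

noncomputable def fw (l m n : ℕ) : ℝ := (((n + m) * (n + m + l).choose l : ℕ) : ℝ)⁻¹

noncomputable def Fc (l m : ℕ) : ℝ := (Hr (m + l) - Hr l) / ((m * (m + l).choose l : ℕ) : ℝ)

lemma Hr_succ (n : ℕ) : Hr (n + 1) = Hr n + ((n:ℝ) + 1)⁻¹ := by
  rw [Hr, Hr, Finset.sum_Icc_succ_top (by omega : 1 ≤ n + 1)]
  push_cast; ring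

lemma Hr_zero : Hr 0 = 0 := by simp [Hr]

lemma core (a l : ℕ) : (a + l).choose (l + 1) * (l + 1) = (a + l).choose l * a := by
  simpa using Nat.choose_succ_right_eq (a + l) l

lemma fw_nonneg (l m n : ℕ) : 0 ≤ fw l m n := by unfold fw; positivity

noncomputable def gg (l m n : ℕ) : ℝ := (((l + 1) * (n + m + l + 1).choose (l + 1) : ℕ) : ℝ)⁻¹

lemma tele (l m n : ℕ) : fw (l+1) m (n+1) = gg l m n - gg l m (n+1) := by
  have hY : 0 < (n + m + l + 1).choose (l + 1) := Nat.choose_pos (by omega)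
  have hZ : 0 < (n + m + l + 2).choose (l + 1) := Nat.choose_pos (by omega)
  have hP : 0 < (n + m + l + 1).choose l := Nat.choose_pos (by omega)
  have hpas : (n + m + l + 2).choose (l + 1)
      = (n + m + l + 1).choose l + (n + m + l + 1).choose (l + 1) :=
    Nat.choose_succ_succ (n + m + l + 1) l
  have hcore : (n + m + l + 1).choose (l + 1) * (l + 1)
      = (n + m + l + 1).choose l * (n + m + 1) := by
    have h := core (n + m + 1) l
    rwa [show n + m + 1 + l = n + m + l + 1 from by omega] at h
  set Y := (n + m + l + 1).choose (l + 1) with hYd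
  set Z := (n + m + l + 2).choose (l + 1) with hZd
  set P := (n + m + l + 1).choose l with hPd
  have e1 : ((Z:ℝ)) = P + Y := by exact_mod_cast hpas
  have e2 : ((Y:ℝ)) * ((l:ℝ) + 1) = P * ((n:ℝ) + m + 1) := by exact_mod_cast hcore
  have hfw : fw (l+1) m (n+1) = (((n + m + 1) * Z : ℕ) : ℝ)⁻¹ := by
    unfold fw
    rw [hZd, show n + 1 + m = n + m + 1 from by omega,
      show n + m + 1 + (l + 1) = n + m + l + 2 from by omega]
  rw [hfw]
  unfold gg
  rw [show n + 1 + m + l + 1 = n + m + l + 2 from by omega]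
  rw [← hYd, ← hZd]
  have hYr : (0:ℝ) < Y := by exact_mod_cast hY
  have hZr : (0:ℝ) < Z := by exact_mod_cast hZ
  push_cast
  have h1 : ((n:ℝ) + m + 1) ≠ 0 := by positivity
  simp only [inv_eq_one_div]
  rw [div_sub_div _ _ (mul_pos (by positivity) hYr).ne' (mul_pos (by positivity) hZr).ne',
    div_eq_div_iff (mul_pos (by positivity) hZr).ne' (mul_pos (mul_pos (by positivity) hYr) (mul_pos (by positivity) hZr)).ne']
  linear_combination ((l:ℝ)+1) * Z * e2 - ((l:ℝ)+1) * Z * ((n:ℝ)+(m:ℝ)+1) * e1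

lemma gg_eq_fw (l m k : ℕ) : gg l m k = fw l m (k+1) := by
  unfold gg fw
  congr 1
  have h := core (k + m + 1) l
  rw [show k + m + 1 + l = k + m + l + 1 from by omega] at h
  rw [show k + 1 + m = k + m + 1 from by omega, show k + m + 1 + l = k + m + l + 1 from by omega]
  have h2 : (l + 1) * (k + m + l + 1).choose (l + 1) = (k + m + 1) * (k + m + l + 1).choose l := by
    rw [mul_comm, h]; ring
  exact_mod_cast h2

lemma gg_pos (l m n : ℕ) : 0 < gg l m n := by
  unfold gg
  have : 0 < (l + 1) * (n + m + l + 1).choose (l + 1) :=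
    Nat.mul_pos l.succ_pos (Nat.choose_pos (by omega))
  have : (0:ℝ) < ((l + 1) * (n + m + l + 1).choose (l + 1) : ℕ) := by exact_mod_cast this
  positivity

lemma gg_le (l m n : ℕ) : gg l m n ≤ ((n:ℝ) + 1)⁻¹ := by
  have h := core (n + m + 1) l
  rw [show n + m + 1 + l = n + m + l + 1 from by omega] at h
  have hP : 0 < (n + m + l + 1).choose l := Nat.choose_pos (by omega)
  have hb : n + 1 ≤ (l + 1) * (n + m + l + 1).choose (l + 1) := by
    calc n + 1 ≤ 1 * (n + m + 1) := by omega
    _ ≤ (n + m + l + 1).choose l * (n + m + 1) := Nat.mul_le_mul_right _ hP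
    _ = (l + 1) * (n + m + l + 1).choose (l + 1) := by rw [← h]; ring
  unfold gg
  rw [inv_le_inv₀ (by exact_mod_cast Nat.lt_of_lt_of_le n.succ_pos hb) (by positivity)]
  exact_mod_cast hb

lemma gg_tendsto (l m k : ℕ) : Tendsto (fun N : ℕ => gg l m (k + N)) atTop (𝓝 0) := by
  have hb : ∀ N : ℕ, gg l m (k + N) ≤ ((N:ℝ) + 1)⁻¹ := by
    intro N
    refine (gg_le l m (k + N)).trans ?_
    rw [inv_le_inv₀ (by positivity) (by positivity)]
    push_cast; linarith
  exact squeeze_zero (fun N => (gg_pos l m (k + N)).le) hb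
    (by simpa [one_div] using tendsto_one_div_add_atTop_nhds_zero_nat (𝕜 := ℝ))

lemma tail_hasSum (l m k : ℕ) : HasSum (fun j : ℕ => fw (l+1) m (k+1+j)) (fw l m (k+1)) := by
  rw [hasSum_iff_tendsto_nat_of_nonneg (fun i => fw_nonneg _ _ _)]
  have hps : ∀ N : ℕ, ∑ j ∈ Finset.range N, fw (l+1) m (k+1+j) = gg l m (k+0) - gg l m (k+N) := by
    intro N
    rw [← Finset.sum_range_sub' (fun j => gg l m (k+j)) N]
    refine Finset.sum_congr rfl fun j _ => ?_
    rw [show k+1+j = (k+j)+1 from by omega, tele, show k+j+1 = k+(j+1) from by omega]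
  simp_rw [hps, Nat.add_zero]
  rw [gg_eq_fw]
  simpa using tendsto_const_nhds.sub (gg_tendsto l m k)

lemma fw_rec (l m n : ℕ) : fw (l+1) m (n+1) = fw l m (n+1) - fw l (m+1) (n+1) := by
  have hA : 0 < (n + 1 + m + l).choose l := Nat.choose_pos (by omega)
  have hB : 0 < (n + 1 + m + l + 1).choose l := Nat.choose_pos (by omega)
  have hD : 0 < (n + 1 + m + l + 1).choose (l + 1) := Nat.choose_pos (by omega)
  have rel1 : (n + 1 + m + l + 1).choose (l + 1) * (l + 1)
      = (n + 1 + m + l + 1).choose l * (n + 1 + m + 1) := by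
    have h := core (n + 1 + m + 1) l
    rwa [show n + 1 + m + 1 + l = n + 1 + m + l + 1 from by omega] at h
  have rel2 : (n + 1 + m + l + 1).choose (l + 1) * (l + 1)
      = (n + 1 + m + l).choose l * (n + 1 + m + l + 1) := by
    have hpas : (n + 1 + m + l + 1).choose (l + 1)
        = (n + 1 + m + l).choose l + (n + 1 + m + l).choose (l + 1) :=
      Nat.choose_succ_succ (n + 1 + m + l) l
    have h := core (n + 1 + m) l
    -- h : (n+1+m+l).choose (l+1) * (l+1) = (n+1+m+l).choose l * (n+1+m)
    calc (n + 1 + m + l + 1).choose (l + 1) * (l + 1)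
        = (n + 1 + m + l).choose l * (l+1) + (n + 1 + m + l).choose (l + 1) * (l+1) := by
          rw [hpas]; ring
      _ = (n + 1 + m + l).choose l * (l+1) + (n + 1 + m + l).choose l * (n + 1 + m) := by rw [h]
      _ = (n + 1 + m + l).choose l * (n + 1 + m + l + 1) := by ring
  have e1 : ((n + 1 + m + l + 1).choose (l + 1) : ℝ) * ((l:ℝ)+1)
      = ((n + 1 + m + l + 1).choose l : ℝ) * ((n:ℝ)+1+m+1) := by exact_mod_cast rel1
  have e2 : ((n + 1 + m + l + 1).choose (l + 1) : ℝ) * ((l:ℝ)+1)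
      = ((n + 1 + m + l).choose l : ℝ) * ((n:ℝ)+1+m+l+1) := by exact_mod_cast rel2
  have hAr : (0:ℝ) < ((n + 1 + m + l).choose l : ℝ) := by exact_mod_cast hA
  have hDr : (0:ℝ) < ((n + 1 + m + l + 1).choose (l + 1) : ℝ) := by exact_mod_cast hD
  unfold fw
  rw [show n + 1 + m + (l+1) = n + 1 + m + l + 1 from by omega,
      show n + 1 + (m+1) = n + 1 + m + 1 from by omega,
      show n + 1 + m + 1 + l = n + 1 + m + l + 1 from by omega]
  push_cast
  rw [show (((n + 1 + m + l + 1).choose l : ℕ) : ℝ)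
        = ((n + 1 + m + l + 1).choose (l + 1) : ℝ) * ((l:ℝ)+1) / ((n:ℝ)+1+m+1) from by
      field_simp; linarith [e1],
    show (((n + 1 + m + l).choose l : ℕ) : ℝ)
        = ((n + 1 + m + l + 1).choose (l + 1) : ℝ) * ((l:ℝ)+1) / ((n:ℝ)+1+m+l+1) from by
      field_simp; linarith [e2]]
  have h1 : ((n:ℝ) + 1 + m) ≠ 0 := by positivity
  field_simp
  ring

lemma Fc_rec (l m : ℕ) (hm : 1 ≤ m) : Fc (l+1) m = Fc l m - Fc l (m+1) := by
  have hc : 0 < (m + l).choose l := Nat.choose_pos (by omega)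
  have hd : 0 < (m + l + 1).choose (l + 1) := Nat.choose_pos (by omega)
  have he : 0 < (m + l + 1).choose l := Nat.choose_pos (by omega)
  have rel1 : (m + l + 1).choose (l + 1) * (l + 1) = (m + l + 1).choose l * (m + 1) := by
    have h := core (m + 1) l
    rwa [show m + 1 + l = m + l + 1 from by omega] at h
  have rel2 : (m + l + 1).choose (l + 1) * (l + 1) = (m + l).choose l * (m + l + 1) := by
    have hpas : (m + l + 1).choose (l + 1)
        = (m + l).choose l + (m + l).choose (l + 1) := Nat.choose_succ_succ (m + l) l
    have h := core m l
    calc (m + l + 1).choose (l + 1) * (l + 1)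
        = (m + l).choose l * (l+1) + (m + l).choose (l + 1) * (l+1) := by rw [hpas]; ring
      _ = (m + l).choose l * (l+1) + (m + l).choose l * m := by rw [h]
      _ = (m + l).choose l * (m + l + 1) := by ring
  have e1 : ((m + l + 1).choose (l + 1) : ℝ) * ((l:ℝ)+1)
      = ((m + l + 1).choose l : ℝ) * ((m:ℝ)+1) := by exact_mod_cast rel1
  have e2 : ((m + l + 1).choose (l + 1) : ℝ) * ((l:ℝ)+1)
      = ((m + l).choose l : ℝ) * ((m:ℝ)+l+1) := by exact_mod_cast rel2
  have hdr : (0:ℝ) < ((m + l + 1).choose (l + 1) : ℝ) := by exact_mod_cast hd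
  have hmr : (0:ℝ) < m := by exact_mod_cast hm
  unfold Fc
  rw [show m + (l+1) = m + l + 1 from by omega, show m + 1 + l = m + l + 1 from by omega,
      Hr_succ (m+l), Hr_succ l]
  push_cast
  rw [show (((m + l + 1).choose l : ℕ) : ℝ)
        = ((m + l + 1).choose (l + 1) : ℝ) * ((l:ℝ)+1) / ((m:ℝ)+1) from by
      field_simp; linarith [e1],
    show (((m + l).choose l : ℕ) : ℝ)
        = ((m + l + 1).choose (l + 1) : ℝ) * ((l:ℝ)+1) / ((m:ℝ)+l+1) from by
      field_simp; linarith [e2]]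
  field_simp
  ring

lemma Hr_range (n : ℕ) : Hr n = ∑ j ∈ Finset.range n, ((j:ℝ) + 1)⁻¹ := by
  induction n with
  | zero => simp [Hr_zero]
  | succ n ih => rw [Hr_succ, ih, Finset.sum_range_succ]

lemma sum_shift (v : ℕ → ℝ) (m N : ℕ) :
    ∑ j ∈ Finset.range N, (v j - v (j + m))
      = ∑ j ∈ Finset.range m, v j - ∑ j ∈ Finset.range m, v (N + j) := by
  induction N with
  | zero => simp
  | succ N ih =>
    rw [Finset.sum_range_succ, ih]
    have key : ∑ j ∈ Finset.range m, v (N + j) - ∑ j ∈ Finset.range m, v (N + 1 + j)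
        = v N - v (N + m) := by
      rw [← Finset.sum_sub_distrib]
      calc ∑ j ∈ Finset.range m, (v (N + j) - v (N + 1 + j))
          = ∑ j ∈ Finset.range m, ((fun i => v (N + i)) j - (fun i => v (N + i)) (j + 1)) := by
            refine Finset.sum_congr rfl fun j _ => by rw [show N + 1 + j = N + (j + 1) from by omega]
        _ = v (N + 0) - v (N + m) := Finset.sum_range_sub' _ m
        _ = v N - v (N + m) := by rw [Nat.add_zero]
    linarith

lemma inv_nat_add_tendsto (j : ℕ) :
    Tendsto (fun N : ℕ => (((N + j : ℕ):ℝ) + 1)⁻¹) atTop (𝓝 0) := by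
  have hb : ∀ N : ℕ, (((N + j : ℕ):ℝ) + 1)⁻¹ ≤ ((N:ℝ) + 1)⁻¹ := by
    intro N
    rw [inv_le_inv₀ (by positivity) (by positivity)]
    push_cast; linarith
  exact squeeze_zero (fun N => by positivity) hb
    (by simpa [one_div] using tendsto_one_div_add_atTop_nhds_zero_nat (𝕜 := ℝ))

lemma base0 (m : ℕ) (hm : 1 ≤ m) :
    HasSum (fun n : ℕ => ((n:ℝ) + 1)⁻¹ * fw 0 m (n + 1)) (Fc 0 m) := by
  have hmr : (0:ℝ) < m := by exact_mod_cast hm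
  have hfw : ∀ n : ℕ, fw 0 m (n + 1) = ((n:ℝ) + 1 + m)⁻¹ := by
    intro n; unfold fw
    rw [Nat.choose_zero_right, Nat.mul_one]
    push_cast; ring_nf
  have hterm : ∀ n : ℕ, ((n:ℝ) + 1)⁻¹ * fw 0 m (n + 1)
      = (m:ℝ)⁻¹ * ((((n:ℕ):ℝ) + 1)⁻¹ - (((n + m : ℕ):ℝ) + 1)⁻¹) := by
    intro n
    rw [hfw]
    have h1 : ((n:ℝ) + 1) ≠ 0 := by positivity
    have h2 : ((n:ℝ) + 1 + m) ≠ 0 := by positivity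
    push_cast
    rw [inv_sub_inv h1 (by positivity : ((n:ℝ) + (m:ℝ) + 1) ≠ 0),
        show (n:ℝ) + (m:ℝ) + 1 - ((n:ℝ) + 1) = (m:ℝ) from by ring]
    have hm0 : (m:ℝ) ≠ 0 := ne_of_gt hmr
    field_simp
    ring_nf
  rw [hasSum_iff_tendsto_nat_of_nonneg (fun n => by
    have := hfw n
    have : 0 ≤ fw 0 m (n+1) := by unfold fw; positivity
    positivity)]
  have hps : ∀ N : ℕ, ∑ n ∈ Finset.range N, ((n:ℝ) + 1)⁻¹ * fw 0 m (n + 1)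
      = (m:ℝ)⁻¹ * (∑ j ∈ Finset.range m, (((j:ℕ):ℝ) + 1)⁻¹
          - ∑ j ∈ Finset.range m, (((N + j : ℕ):ℝ) + 1)⁻¹) := by
    intro N
    calc ∑ n ∈ Finset.range N, ((n:ℝ) + 1)⁻¹ * fw 0 m (n + 1)
        = ∑ n ∈ Finset.range N, (m:ℝ)⁻¹ * ((((n:ℕ):ℝ) + 1)⁻¹ - (((n + m : ℕ):ℝ) + 1)⁻¹) :=
          Finset.sum_congr rfl fun n _ => hterm n
      _ = (m:ℝ)⁻¹ * ∑ n ∈ Finset.range N, ((((n:ℕ):ℝ) + 1)⁻¹ - (((n + m : ℕ):ℝ) + 1)⁻¹) := by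
          rw [Finset.mul_sum]
      _ = _ := by rw [sum_shift (fun j => (((j:ℕ):ℝ) + 1)⁻¹) m N]
  simp_rw [hps]
  have htail : Tendsto (fun N : ℕ => ∑ j ∈ Finset.range m, (((N + j : ℕ):ℝ) + 1)⁻¹)
      atTop (𝓝 0) := by
    have := tendsto_finset_sum (Finset.range m)
      (fun j _ => inv_nat_add_tendsto j)
    simpa using this
  have hFc : Fc 0 m = (m:ℝ)⁻¹ * (∑ j ∈ Finset.range m, (((j:ℕ):ℝ) + 1)⁻¹ - 0) := by
    unfold Fc
    rw [Nat.add_zero, Nat.choose_zero_right, Nat.mul_one, Hr_zero, Hr_range]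
    rw [sub_zero]
    exact div_eq_inv_mul _ _
  rw [hFc]
  exact (tendsto_const_nhds.sub htail).const_mul _

lemma gHH_nonneg (q n : ℕ) : 0 ≤ gHH 1 q n := by
  induction q generalizing n with
  | zero =>
    unfold gHH
    split
    · exact le_refl 0
    · positivity
  | succ q ih => exact Finset.sum_nonneg fun k _ => ih k

lemma gHH_zero_succ (n : ℕ) : gHH 1 0 (n+1) = ((n:ℝ) + 1)⁻¹ := by
  unfold gHH
  norm_num

lemma sum_Icc_one (f : ℕ → ℝ) (n : ℕ) :
    ∑ k ∈ Finset.Icc 1 n, f k = ∑ k ∈ Finset.range n, f (k+1) := by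
  induction n with
  | zero => simp
  | succ n ih =>
    rw [Finset.sum_Icc_succ_top (by omega : 1 ≤ n + 1), ih, Finset.sum_range_succ]

lemma baseB (l : ℕ) : ∀ m : ℕ, 1 ≤ m →
    HasSum (fun n : ℕ => ((n:ℝ) + 1)⁻¹ * fw l m (n + 1)) (Fc l m) := by
  induction l with
  | zero => exact base0
  | succ l ih =>
    intro m hm
    have h := (ih m hm).sub (ih (m+1) (by omega))
    have hfe : (fun n : ℕ => ((n:ℝ) + 1)⁻¹ * fw (l+1) m (n + 1))
        = fun n : ℕ => ((n:ℝ) + 1)⁻¹ * fw l m (n + 1) - ((n:ℝ) + 1)⁻¹ * fw l (m+1) (n + 1) := by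
      funext n; rw [fw_rec]; ring
    rw [hfe, Fc_rec l m hm]
    exact h

lemma mainM (q : ℕ) : ∀ l m : ℕ, q ≤ l → 1 ≤ m →
    HasSum (fun n : ℕ => gHH 1 q (n+1) * fw l m (n+1)) (Fc (l-q) m) := by
  induction q with
  | zero =>
    intro l m _ hm
    simp only [gHH_zero_succ, Nat.sub_zero]
    exact baseB l m hm
  | succ q ih =>
    intro l m hql hm
    obtain ⟨l', rfl⟩ : ∃ l', l = l' + 1 := ⟨l - 1, by omega⟩
    have hql' : q ≤ l' := by omega
    set G : ℕ × ℕ → ℝ := fun p =>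
      if p.1 ≤ p.2 then gHH 1 q (p.1+1) * fw (l'+1) m (p.2+1) else 0 with hGdef
    have hGnn : 0 ≤ G := by
      intro p
      simp only [hGdef]
      split
      · exact mul_nonneg (gHH_nonneg _ _) (fw_nonneg _ _ _)
      · exact le_refl 0
    have rows : ∀ k : ℕ, HasSum (fun n => G (k, n)) (gHH 1 q (k+1) * fw l' m (k+1)) := by
      intro k
      have ht := (tail_hasSum l' m k).mul_left (gHH 1 q (k+1))
      have hinj : Function.Injective (fun j : ℕ => k + j) :=
        fun a b h => Nat.add_left_cancel h
      have hzero : ∀ n, n ∉ Set.range (fun j : ℕ => k + j) → G (k, n) = 0 := by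
        intro n hn
        have hkn : ¬ (k ≤ n) := by
          intro hle
          exact hn ⟨n - k, by simp; omega⟩
        simp only [hGdef, if_neg hkn]
      rw [← Function.Injective.hasSum_iff hinj hzero]
      refine ht.congr_fun fun j => ?_
      simp only [Function.comp, hGdef, if_pos (Nat.le_add_right k j)]
      rw [show k + j + 1 = k + 1 + j from by omega]
    have hrowsum : HasSum (fun k : ℕ => gHH 1 q (k+1) * fw l' m (k+1)) (Fc (l'-q) m) :=
      ih l' m hql' hm
    have hGsummable : Summable G := by
      rw [summable_prod_of_nonneg hGnn]
      constructor
      · exact fun k => (rows k).summable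
      · apply Summable.congr hrowsum.summable
        intro k
        exact ((rows k).tsum_eq).symm
    have hGsum : HasSum G (Fc (l'-q) m) := by
      have h1 := hGsummable.hasSum
      have h2 := h1.prod_fiberwise rows
      rwa [h2.unique hrowsum] at h1
    have hG' : HasSum (fun p : ℕ × ℕ => G (p.2, p.1)) (Fc (l'-q) m) := by
      have := ((Equiv.prodComm ℕ ℕ).hasSum_iff (f := G)).mpr hGsum
      exact this
    have cols : ∀ n : ℕ, HasSum (fun k => G (k, n)) (gHH 1 (q+1) (n+1) * fw (l'+1) m (n+1)) := by
      intro n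
      have hfin : ∀ k ∉ Finset.range (n+1), G (k, n) = 0 := by
        intro k hk
        have : ¬ (k ≤ n) := by
          simp only [Finset.mem_range] at hk; omega
        simp only [hGdef, if_neg this]
      have hval : ∑ k ∈ Finset.range (n+1), G (k, n)
          = gHH 1 (q+1) (n+1) * fw (l'+1) m (n+1) := by
        have h1 : ∀ k ∈ Finset.range (n+1), G (k, n) = gHH 1 q (k+1) * fw (l'+1) m (n+1) := by
          intro k hk
          simp only [Finset.mem_range] at hk
          simp only [hGdef, if_pos (by omega : k ≤ n)]
        rw [Finset.sum_congr rfl h1, ← Finset.sum_mul]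
        congr 1
        show (∑ k ∈ Finset.range (n + 1), gHH 1 q (k + 1)) = gHH 1 (q+1) (n+1)
        rw [show gHH 1 (q+1) (n+1) = ∑ k ∈ Finset.Icc 1 (n+1), gHH 1 q k from rfl]
        rw [sum_Icc_one (fun k => gHH 1 q k) (n+1)]
      exact hval ▸ hasSum_sum_of_ne_finset_zero hfin
    have final := hG'.prod_fiberwise cols
    rwa [show l' + 1 - (q + 1) = l' - q from by omega]

lemma alt_eq (L : ℕ) : ∀ m : ℕ, 1 ≤ m →
    ∑ j ∈ Finset.range (L+1), (-1:ℝ)^j * (L.choose j : ℝ) * Hr (m+j) / ((m:ℝ) + j) = Fc L m := by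
  induction L with
  | zero =>
    intro m hm
    simp [Fc, Hr_zero]
  | succ L ih =>
    intro m hm
    have key : ∑ j ∈ Finset.range (L+2), (-1:ℝ)^j * ((L+1).choose j : ℝ) * Hr (m+j) / ((m:ℝ) + j)
        = (∑ j ∈ Finset.range (L+1), (-1:ℝ)^j * (L.choose j : ℝ) * Hr (m+j) / ((m:ℝ) + j))
          - ∑ j ∈ Finset.range (L+1), (-1:ℝ)^j * (L.choose j : ℝ) * Hr ((m+1)+j) / ((m:ℝ) + 1 + (j:ℝ)) := by
      rw [Finset.sum_range_succ' (fun j => (-1:ℝ)^j * ((L+1).choose j : ℝ) * Hr (m+j) / ((m:ℝ) + j)) (L+1)]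
      have hsplit : ∀ i ∈ Finset.range (L+1),
          (-1:ℝ)^(i+1) * ((L+1).choose (i+1) : ℝ) * Hr (m+(i+1)) / ((m:ℝ) + ((i+1:ℕ):ℝ))
          = (-((-1:ℝ)^i * (L.choose i : ℝ) * Hr ((m+1)+i) / ((m:ℝ) + 1 + (i:ℝ))))
            + (-1:ℝ)^(i+1) * (L.choose (i+1) : ℝ) * Hr (m+(i+1)) / ((m:ℝ) + ((i+1:ℕ):ℝ)) := by
        intro i _
        have hc : (((L+1).choose (i+1) : ℕ) : ℝ) = (L.choose i : ℝ) + (L.choose (i+1) : ℝ) := by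
          rw [Nat.choose_succ_succ]; push_cast; ring
        rw [hc, show m + (i+1) = (m+1) + i from by omega]
        push_cast
        ring
      rw [Finset.sum_congr rfl hsplit, Finset.sum_add_distrib]
      have hW : ∑ i ∈ Finset.range (L+1),
          (-1:ℝ)^(i+1) * (L.choose (i+1) : ℝ) * Hr (m+(i+1)) / ((m:ℝ) + ((i+1:ℕ):ℝ))
          = (∑ j ∈ Finset.range (L+1), (-1:ℝ)^j * (L.choose j : ℝ) * Hr (m+j) / ((m:ℝ) + j))
            - (-1:ℝ)^0 * (L.choose 0 : ℝ) * Hr (m+0) / ((m:ℝ) + (0:ℕ)) := by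
        rw [Finset.sum_range_succ' (fun j => (-1:ℝ)^j * (L.choose j : ℝ) * Hr (m+j) / ((m:ℝ) + j)) L]
        rw [Finset.sum_range_succ]
        simp [Nat.choose_succ_self]
      rw [hW]
      simp only [Finset.sum_neg_distrib]
      push_cast [Nat.choose_zero_right]
      ring
    have ih2 := ih (m+1) (by omega)
    push_cast at ih2
    rw [key, ih m hm, ih2, Fc_rec L m hm]

lemma gH_one (n : ℕ) : gH 1 n = Hr n := by
  unfold gH Hr
  norm_num

lemma hasSum_pnat_iff' (g : ℕ → ℝ) (a : ℝ) :
    HasSum (fun n : ℕ+ => g (n:ℕ)) a ↔ HasSum (fun n : ℕ => g (n+1)) a := by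
  rw [← Equiv.pnatEquivNat.symm.hasSum_iff]
  constructor <;> intro h <;> refine h.congr_fun fun n => ?_ <;>
    simp [Equiv.pnatEquivNat, Function.comp]

/-- Closed forms for the series of hyperharmonic numbers with reciprocal
binomial coefficients, `l ≥ q`, `m ≥ 1`. -/
theorem stmt_8 (q l m : ℕ) (hlq : q ≤ l) (hm : 1 ≤ m) :
    (∑' n : ℕ+, gHH 1 q n / (((n : ℝ) + m) * ((((n : ℕ) + m + l).choose l : ℕ) : ℝ))
        = ∑ j ∈ Finset.range (l - q + 1),
            (-1 : ℝ) ^ j * ((l - q).choose j : ℝ) * gH 1 (m + j) / ((m : ℝ) + j))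
    ∧ (∑' n : ℕ+, gHH 1 q n / (((n : ℝ) + m) * ((((n : ℕ) + m + l).choose l : ℕ) : ℝ))
        = (gH 1 (m + l - q) - gH 1 (l - q)) / ((m : ℝ) * (((m + l - q).choose (l - q) : ℕ) : ℝ))) := by
  have key : HasSum (fun n : ℕ+ =>
      gHH 1 q n / (((n : ℝ) + m) * ((((n : ℕ) + m + l).choose l : ℕ) : ℝ))) (Fc (l - q) m) := by
    have h1 := mainM q l m hlq hm
    have h2 := (hasSum_pnat_iff' (fun n => gHH 1 q n * fw l m n) (Fc (l - q) m)).mpr h1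
    refine h2.congr_fun fun n => ?_
    unfold fw
    rw [div_eq_mul_inv]
    congr 1
    push_cast
    ring
  have hts := key.tsum_eq
  constructor
  · rw [hts, ← alt_eq (l - q) m hm]
    refine Finset.sum_congr rfl fun j _ => ?_
    rw [gH_one]
  · rw [hts]
    unfold Fc
    rw [gH_one, gH_one, show m + l - q = m + (l - q) from by omega]
    push_cast
    ring
end
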